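/- Let (V, •, ∘, 1, ∂) be a 2-associative differential algebra and define m_n: V^{⊗n} → V by the recursion m_1 = ∂, m_n = ∂∘^{(n−1)} − Σ_{k=2}^n ∘^{(k−1)}(Σ_{i+1+j=k} id^{⊗i} ⊗ m_{n−i−j} ⊗ id^{⊗j}). Then the family (m_n)_{n≥1} satisfies the (shifted) A_∞ relations: for every n ≥ 1, Σ_{i,j≥0, i+j<n} m_{i+1+j}(id^{⊗i} ⊗ m_{n−i−j} ⊗ id^{⊗j}) = 0 as maps V^{⊗n} → V (with Koszul signs on elements). -/

import Mathlib

noncomputable section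

namespace Paper

variable {K V : Type*} [Field K] [AddCommGroup V] [Module K V]

/-- Iterated product `v₁ ∘ (v₂ ∘ (⋯ ∘ (vₙ ∘ 1)))` of a list of elements of `V`;
for a unital operation this is `∘^{(n-1)}` on nonempty lists. -/
def cprod (circ : V →ₗ[K] V →ₗ[K] V) (one : V) : List V → V
  | [] => one
  | a :: l => circ a (cprod circ one l)

variable (𝒜 : ℤ → Submodule K V)

/-- The underlying list of vectors of a list of homogeneous elements. -/
def toV : List (Σ i : ℤ, 𝒜 i) → List V := fun l => l.map fun p => (p.2 : V)

/-- Total degree of a list of homogeneous elements. -/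
def degsum : List (Σ i : ℤ, 𝒜 i) → ℤ := fun l => (l.map Sigma.fst).sum

end Paper

open Paper

namespace Stmt19

variable {K V : Type*} [Field K] [AddCommGroup V] [Module K V]

section Sign

lemma sgn_mul (s t : ℤ) : (-1 : K)^s * (-1:K)^t = (-1:K)^(s+t) := by
  rw [zpow_add₀]; norm_num

lemma sgn_sq (s : ℤ) : (-1 : K)^s * (-1:K)^s = 1 := by
  rw [sgn_mul]
  have : s + s = 2 * s := by ring
  rw [this, zpow_mul]; norm_num

lemma sgn_sub_one (s : ℤ) : (-1 : K)^(s-1) = -((-1:K)^s) := by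
  rw [zpow_sub₀ (by norm_num : (-1:K) ≠ 0)]; norm_num [div_neg]

lemma sgn_even (s : ℤ) : (-1 : K)^(2*s) = 1 := by
  rw [zpow_mul]; norm_num

lemma sgn_cancel (s t : ℤ) : (-1 : K)^(s+t) * (-1:K)^s = (-1:K)^t := by
  rw [sgn_mul]
  have h : s + t + s = 2*s + t := by ring
  rw [h, ← sgn_mul, sgn_even, one_mul]

end Sign

variable (𝒜 : ℤ → Submodule K V)

section Lists

lemma toV_nil : toV 𝒜 [] = [] := rfl
lemma toV_cons (x : Σ i : ℤ, 𝒜 i) (l : List (Σ i : ℤ, 𝒜 i)) :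
    toV 𝒜 (x :: l) = (x.2 : V) :: toV 𝒜 l := rfl
lemma toV_append (a b : List (Σ i : ℤ, 𝒜 i)) : toV 𝒜 (a ++ b) = toV 𝒜 a ++ toV 𝒜 b :=
  List.map_append
lemma toV_take (l : List (Σ i : ℤ, 𝒜 i)) (k : ℕ) : toV 𝒜 (l.take k) = (toV 𝒜 l).take k :=
  List.map_take
lemma toV_drop (l : List (Σ i : ℤ, 𝒜 i)) (k : ℕ) : toV 𝒜 (l.drop k) = (toV 𝒜 l).drop k :=
  List.map_drop
lemma length_toV (l : List (Σ i : ℤ, 𝒜 i)) : (toV 𝒜 l).length = l.length :=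
  List.length_map _

lemma degsum_nil : degsum 𝒜 [] = 0 := rfl
lemma degsum_cons (x : Σ i : ℤ, 𝒜 i) (l : List (Σ i : ℤ, 𝒜 i)) :
    degsum 𝒜 (x :: l) = x.1 + degsum 𝒜 l := by
  simp [degsum]
lemma degsum_append (a b : List (Σ i : ℤ, 𝒜 i)) :
    degsum 𝒜 (a ++ b) = degsum 𝒜 a + degsum 𝒜 b := by
  simp [degsum]

end Lists

section SFinset

def S (n : ℕ) : Finset (ℕ × ℕ) := (Finset.range n ×ˢ Finset.range n).filter fun p => p.1 + p.2 < n

lemma mem_S {n : ℕ} {p : ℕ × ℕ} : p ∈ S n ↔ p.1 + p.2 < n := by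
  simp only [S, Finset.mem_filter, Finset.mem_product, Finset.mem_range]
  omega

lemma sum_S {M : Type*} [AddCommMonoid M] (n : ℕ) (f : ℕ → ℕ → M) :
    (∑ i ∈ Finset.range n, ∑ j ∈ Finset.range (n - i), f i j) = ∑ p ∈ S n, f p.1 p.2 := by
  rw [S, Finset.sum_filter, Finset.sum_product]
  refine Finset.sum_congr rfl fun i hi => ?_
  rw [Finset.mem_range] at hi
  have sub : Finset.range (n - i) ⊆ Finset.range n := by
    intro j hj; rw [Finset.mem_range] at *; omega
  rw [← Finset.sum_subset sub (fun j hj hj' => by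
    rw [Finset.mem_range] at hj hj'
    exact if_neg (by omega))]
  exact Finset.sum_congr rfl fun j hj => by
    rw [Finset.mem_range] at hj; exact (if_pos (by omega)).symm

end SFinset



section Cprod

variable (circ : V →ₗ[K] V →ₗ[K] V) (one : V)

lemma cprod_cons (a : V) (l : List V) : cprod circ one (a :: l) = circ a (cprod circ one l) := rfl

/-- `cprod` as a linear map in one designated slot. -/
def slot (L₁ L₂ : List V) : V →ₗ[K] V where
  toFun v := cprod circ one (L₁ ++ v :: L₂)
  map_add' u v := by
    induction L₁ with
    | nil => simp [cprod_cons]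
    | cons a t ih => simpa [cprod_cons] using congrArg (circ a) ih
  map_smul' c v := by
    induction L₁ with
    | nil => simp [cprod_cons]
    | cons a t ih => simpa [cprod_cons] using congrArg (circ a) ih

lemma slot_apply (L₁ L₂ : List V) (v : V) :
    slot circ one L₁ L₂ v = cprod circ one (L₁ ++ v :: L₂) := rfl

lemma cprod_toV_mem (hone : one ∈ 𝒜 0)
    (hcdeg : ∀ (i j : ℤ) (v w : V), v ∈ 𝒜 i → w ∈ 𝒜 j → circ v w ∈ 𝒜 (i + j)) :
    ∀ l : List (Σ i : ℤ, 𝒜 i), cprod circ one (toV 𝒜 l) ∈ 𝒜 (degsum 𝒜 l) := by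
  intro l
  induction l with
  | nil => exact hone
  | cons x l ih =>
    rw [toV_cons, degsum_cons, cprod_cons]
    exact hcdeg _ _ _ _ x.2.2 ih

lemma cprod_mix_mem (hone : one ∈ 𝒜 0)
    (hcdeg : ∀ (i j : ℤ) (v w : V), v ∈ 𝒜 i → w ∈ 𝒜 j → circ v w ∈ 𝒜 (i + j))
    (d : ℤ) (v : V) (hv : v ∈ 𝒜 d) (a b : List (Σ i : ℤ, 𝒜 i)) :
    cprod circ one (toV 𝒜 a ++ v :: toV 𝒜 b) ∈ 𝒜 (degsum 𝒜 a + d + degsum 𝒜 b) := by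
  induction a with
  | nil =>
    rw [toV_nil, List.nil_append, cprod_cons, degsum_nil]
    have := hcdeg d (degsum 𝒜 b) v _ hv (cprod_toV_mem 𝒜 circ one hone hcdeg b)
    convert this using 2
    ring
  | cons x a ih =>
    rw [toV_cons, List.cons_append, cprod_cons, degsum_cons]
    have := hcdeg x.1 (degsum 𝒜 a + d + degsum 𝒜 b) _ _ x.2.2 ih
    convert this using 2
    ring

end Cprod

section Hins

variable (m : List V → V)

open Classical in
def mp (l : List (Σ i : ℤ, 𝒜 i)) : Σ i : ℤ, 𝒜 i :=
  ⟨degsum 𝒜 l - 1, if h : m (toV 𝒜 l) ∈ 𝒜 (degsum 𝒜 l - 1) then ⟨m (toV 𝒜 l), h⟩ else 0⟩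

lemma mp_fst (l : List (Σ i : ℤ, 𝒜 i)) : (mp 𝒜 m l).1 = degsum 𝒜 l - 1 := rfl

def hins (l : List (Σ i : ℤ, 𝒜 i)) (i j : ℕ) : List (Σ i : ℤ, 𝒜 i) :=
  l.take i ++ mp 𝒜 m ((l.drop i).take (l.length - i - j)) :: l.drop (l.length - j)

lemma hins_append (a b c : List (Σ i : ℤ, 𝒜 i)) :
    hins 𝒜 m (a ++ b ++ c) a.length c.length = a ++ mp 𝒜 m b :: c := by
  unfold hins
  have h1 : (a ++ b ++ c).take a.length = a := by
    rw [List.append_assoc]; exact List.take_left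
  have h2 : (a ++ b ++ c).drop a.length = b ++ c := by
    rw [List.append_assoc]; exact List.drop_left
  have h3 : (a ++ b ++ c).length - a.length - c.length = b.length := by
    simp [List.length_append]
  have h4 : (a ++ b ++ c).drop ((a ++ b ++ c).length - c.length) = c := by
    have : (a ++ b ++ c).length - c.length = (a ++ b).length := by
      simp only [List.length_append]; omega
    rw [this]; exact List.drop_left
  rw [h1, h2, h3, h4, List.take_left]

lemma decomp {l : List (Σ i : ℤ, 𝒜 i)} {i j : ℕ} (h : i + j < l.length) :
    l = l.take i ++ ((l.drop i).take (l.length - i - j)) ++ l.drop (l.length - j)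
    ∧ (l.take i).length = i
    ∧ ((l.drop i).take (l.length - i - j)).length = l.length - i - j
    ∧ (l.drop (l.length - j)).length = j := by
  have hi : (l.take i).length = i := by rw [List.length_take]; omega
  have hm : ((l.drop i).take (l.length - i - j)).length = l.length - i - j := by
    rw [List.length_take, List.length_drop]; omega
  have hj : (l.drop (l.length - j)).length = j := by rw [List.length_drop]; omega
  refine ⟨?_, hi, hm, hj⟩
  conv_lhs => rw [← List.take_append_drop i l]
  rw [List.append_assoc]
  congr 1
  conv_lhs => rw [← List.take_append_drop (l.length - i - j) (l.drop i)]
  congr 1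
  rw [List.drop_drop]
  congr 1
  omega

lemma hins_eq_of_decomp {l a b c : List (Σ i : ℤ, 𝒜 i)} {i j : ℕ}
    (hl : l = a ++ b ++ c) (ha : a.length = i) (hc : c.length = j) :
    hins 𝒜 m l i j = a ++ mp 𝒜 m b :: c := by
  subst hl; rw [← ha, ← hc]; exact hins_append 𝒜 m a b c

lemma length_hins {l : List (Σ i : ℤ, 𝒜 i)} {i j : ℕ} (h : i + j < l.length) :
    (hins 𝒜 m l i j).length = i + 1 + j := by
  obtain ⟨hl, hi, hm, hj⟩ := decomp 𝒜 h
  rw [hins_eq_of_decomp 𝒜 m hl hi hj]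
  simp only [List.length_append, List.length_cons, hi, hj]
  omega

lemma hins_ne_nil (l : List (Σ i : ℤ, 𝒜 i)) (i j : ℕ) : hins 𝒜 m l i j ≠ [] := by
  unfold hins
  intro h
  exact absurd (congrArg List.length h) (by simp [List.length_append])

lemma degsum_hins {l : List (Σ i : ℤ, 𝒜 i)} {i j : ℕ} (h : i + j < l.length) :
    degsum 𝒜 (hins 𝒜 m l i j) = degsum 𝒜 l - 1 := by
  obtain ⟨hl, hi, hm, hj⟩ := decomp 𝒜 h
  rw [hins_eq_of_decomp 𝒜 m hl hi hj]
  conv_rhs => rw [hl]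
  rw [degsum_append, degsum_append, degsum_cons, degsum_append, mp_fst]
  ring

end Hins


section Mmem

variable (circ : V →ₗ[K] V →ₗ[K] V) (one : V) (δ : V →ₗ[K] V) (m : List V → V)

variable (hone : one ∈ 𝒜 0)
  (hcdeg : ∀ (i j : ℤ) (v w : V), v ∈ 𝒜 i → w ∈ 𝒜 j → circ v w ∈ 𝒜 (i + j))
  (hδdeg : ∀ (i : ℤ), ∀ v ∈ 𝒜 i, δ v ∈ 𝒜 (i - 1))
  (hm1 : ∀ v : V, m [v] = δ v)
  (hmrec : ∀ l : List (Σ i : ℤ, 𝒜 i), 2 ≤ l.length →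
      m (toV 𝒜 l)
        = δ (cprod circ one (toV 𝒜 l))
          - ∑ k ∈ Finset.Icc 2 l.length, ∑ i ∈ Finset.range k,
              ((-1 : K) ^ degsum 𝒜 (l.take i)) •
                cprod circ one
                  ((toV 𝒜 l).take i
                    ++ m (((toV 𝒜 l).drop i).take (l.length - k + 1))
                      :: (toV 𝒜 l).drop (i + (l.length - k + 1))))

include hone hcdeg hδdeg hm1 hmrec

lemma m_mem : ∀ l : List (Σ i : ℤ, 𝒜 i), l ≠ [] → m (toV 𝒜 l) ∈ 𝒜 (degsum 𝒜 l - 1) := by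
  suffices H : ∀ (n : ℕ) (l : List (Σ i : ℤ, 𝒜 i)), l.length = n → l ≠ [] →
      m (toV 𝒜 l) ∈ 𝒜 (degsum 𝒜 l - 1) by
    intro l hl; exact H l.length l rfl hl
  intro n
  induction n using Nat.strong_induction_on with
  | _ n ih =>
    intro l hn hl
    rcases n with _ | n
    · exact absurd (List.length_eq_zero_iff.mp hn) hl
    rcases n with _ | n
    · obtain ⟨x, rfl⟩ := List.length_eq_one_iff.mp hn
      have : toV 𝒜 [x] = [(x.2 : V)] := rfl
      rw [this, hm1]
      have : degsum 𝒜 [x] = x.1 := by rw [degsum_cons, degsum_nil, add_zero]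
      rw [this]
      exact hδdeg _ _ x.2.2
    · -- length ≥ 2
      have h2 : 2 ≤ l.length := by omega
      rw [hmrec l h2]
      refine Submodule.sub_mem _ ?_ ?_
      · have := hδdeg _ _ (cprod_toV_mem 𝒜 circ one hone hcdeg l)
        exact this
      · refine Submodule.sum_mem _ fun k hk => Submodule.sum_mem _ fun i hi => ?_
        rw [Finset.mem_Icc] at hk
        rw [Finset.mem_range] at hi
        refine Submodule.smul_mem _ _ ?_
        set mid := (l.drop i).take (l.length - k + 1) with hmid
        have hmv : ((toV 𝒜 l).drop i).take (l.length - k + 1) = toV 𝒜 mid := by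
          rw [hmid, toV_take, toV_drop]
        have hmidlen : mid.length = l.length - k + 1 := by
          rw [hmid, List.length_take, List.length_drop]; omega
        have hmmem : m (toV 𝒜 mid) ∈ 𝒜 (degsum 𝒜 mid - 1) := by
          refine ih mid.length (by omega) mid rfl ?_
          intro h0
          rw [h0] at hmidlen
          simp at hmidlen
        have h1 : (toV 𝒜 l).take i = toV 𝒜 (l.take i) := (toV_take 𝒜 l i).symm
        have h2' : (toV 𝒜 l).drop (i + (l.length - k + 1)) = toV 𝒜 (l.drop (i + (l.length - k + 1))) :=
          (toV_drop 𝒜 l _).symm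
        rw [hmv, h1, h2']
        have := cprod_mix_mem 𝒜 circ one hone hcdeg _ _ hmmem (l.take i) (l.drop (i + (l.length - k + 1)))
        convert this using 2
        have hsplit : degsum 𝒜 l = degsum 𝒜 (l.take i) + degsum 𝒜 mid
            + degsum 𝒜 (l.drop (i + (l.length - k + 1))) := by
          conv_lhs => rw [← List.take_append_drop i l, degsum_append]
          rw [hmid]
          conv_lhs => rw [← List.take_append_drop (l.length - k + 1) (l.drop i), degsum_append]
          rw [List.drop_drop]
          ring_nf
        rw [hsplit]
        ring
  
lemma mp_val {l : List (Σ i : ℤ, 𝒜 i)} (hl : l ≠ []) :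
    ((mp 𝒜 m l).2 : V) = m (toV 𝒜 l) := by
  unfold mp
  rw [dif_pos (m_mem 𝒜 circ one δ m hone hcdeg hδdeg hm1 hmrec l hl)]

lemma toV_hins {l : List (Σ i : ℤ, 𝒜 i)} {i j : ℕ} (h : i + j < l.length) :
    toV 𝒜 (hins 𝒜 m l i j)
      = (toV 𝒜 l).take i
          ++ m (((toV 𝒜 l).drop i).take (l.length - i - j))
            :: (toV 𝒜 l).drop (l.length - j) := by
  unfold hins
  rw [toV_append, toV_cons, toV_take, toV_drop]
  congr 2
  rw [mp_val 𝒜 circ one δ m hone hcdeg hδdeg hm1 hmrec (l := (l.drop i).take (l.length - i - j))]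
  · rw [toV_take, toV_drop]
  · intro h0
    have := congrArg List.length h0
    rw [List.length_take, List.length_drop] at this
    simp at this
    omega

end Mmem


section Star

variable (circ : V →ₗ[K] V →ₗ[K] V) (one : V) (δ : V →ₗ[K] V) (m : List V → V)

variable (hone : one ∈ 𝒜 0)
  (hcdeg : ∀ (i j : ℤ) (v w : V), v ∈ 𝒜 i → w ∈ 𝒜 j → circ v w ∈ 𝒜 (i + j))
  (hcunit : ∀ v : V, circ one v = v ∧ circ v one = v)
  (hδdeg : ∀ (i : ℤ), ∀ v ∈ 𝒜 i, δ v ∈ 𝒜 (i - 1))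
  (hm1 : ∀ v : V, m [v] = δ v)
  (hmrec : ∀ l : List (Σ i : ℤ, 𝒜 i), 2 ≤ l.length →
      m (toV 𝒜 l)
        = δ (cprod circ one (toV 𝒜 l))
          - ∑ k ∈ Finset.Icc 2 l.length, ∑ i ∈ Finset.range k,
              ((-1 : K) ^ degsum 𝒜 (l.take i)) •
                cprod circ one
                  ((toV 𝒜 l).take i
                    ++ m (((toV 𝒜 l).drop i).take (l.length - k + 1))
                      :: (toV 𝒜 l).drop (i + (l.length - k + 1))))

lemma hins_l00 (l : List (Σ i : ℤ, 𝒜 i)) : hins 𝒜 m l 0 0 = [mp 𝒜 m l] := by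
  have := hins_eq_of_decomp 𝒜 m (l := l) (a := []) (b := l) (c := [])
    (by simp) rfl rfl
  simpa using this

include hone hcdeg hcunit hδdeg hm1 hmrec

lemma term00 {l : List (Σ i : ℤ, 𝒜 i)} (hl : l ≠ []) :
    ((-1:K) ^ degsum 𝒜 (l.take 0)) • cprod circ one (toV 𝒜 (hins 𝒜 m l 0 0))
      = m (toV 𝒜 l) := by
  rw [List.take_zero, degsum_nil, zpow_zero, one_smul, hins_l00]
  have h1 : toV 𝒜 [mp 𝒜 m l] = [m (toV 𝒜 l)] := by
    rw [toV_cons, toV_nil, mp_val 𝒜 circ one δ m hone hcdeg hδdeg hm1 hmrec hl]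
  rw [h1, cprod_cons]
  exact (hcunit _).2

lemma star : ∀ l : List (Σ i : ℤ, 𝒜 i), l ≠ [] →
    (∑ p ∈ S l.length, ((-1:K) ^ degsum 𝒜 (l.take p.1)) •
        cprod circ one (toV 𝒜 (hins 𝒜 m l p.1 p.2)))
      = δ (cprod circ one (toV 𝒜 l)) := by
  intro l hl
  rcases hlen : l.length with _ | n
  · exact absurd (List.length_eq_zero_iff.mp hlen) hl
  rcases n with _ | n
  · -- length 1
    obtain ⟨x, rfl⟩ := List.length_eq_one_iff.mp hlen
    have hS1 : S 1 = {((0 : ℕ), (0 : ℕ))} := by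
      ext p
      rw [mem_S, Finset.mem_singleton, Prod.ext_iff]
      omega
    rw [hS1, Finset.sum_singleton,
      term00 𝒜 circ one δ m hone hcdeg hcunit hδdeg hm1 hmrec hl]
    have h1 : toV 𝒜 [x] = [(x.2 : V)] := rfl
    rw [h1, hm1, cprod_cons]
    have : cprod circ one ([] : List V) = one := rfl
    rw [this, (hcunit _).2]
  · -- length ≥ 2
    have h2 : 2 ≤ l.length := by omega
    have h00 : ((0:ℕ), (0:ℕ)) ∈ S l.length := mem_S.2 (by omega)
    rw [← hlen, ← Finset.add_sum_erase _ _ h00,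
      term00 𝒜 circ one δ m hone hcdeg hcunit hδdeg hm1 hmrec hl]
    have hx : (∑ k ∈ Finset.Icc 2 l.length, ∑ i ∈ Finset.range k,
        ((-1 : K) ^ degsum 𝒜 (l.take i)) •
          cprod circ one
            ((toV 𝒜 l).take i
              ++ m (((toV 𝒜 l).drop i).take (l.length - k + 1))
                :: (toV 𝒜 l).drop (i + (l.length - k + 1))))
        = ∑ p ∈ (S l.length).erase (0,0),
            ((-1:K) ^ degsum 𝒜 (l.take p.1)) •
              cprod circ one (toV 𝒜 (hins 𝒜 m l p.1 p.2)) := by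
      rw [Finset.sum_sigma' (Finset.Icc 2 l.length) (fun k => Finset.range k)]
      refine Finset.sum_nbij' (i := fun x => (x.2, x.1 - 1 - x.2))
        (j := fun p => ⟨p.1 + p.2 + 1, p.1⟩) ?_ ?_ ?_ ?_ ?_
      · intro x hx
        rw [Finset.mem_sigma, Finset.mem_Icc, Finset.mem_range] at hx
        rw [Finset.mem_erase, mem_S]
        constructor
        · intro hcon
          rw [Prod.ext_iff] at hcon
          simp only at hcon
          omega
        · simp only
          omega
      · intro p hp
        rw [Finset.mem_erase, mem_S] at hp
        rw [Finset.mem_sigma, Finset.mem_Icc, Finset.mem_range]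
        have : p ≠ (0,0) := hp.1
        rw [Ne, Prod.ext_iff] at this
        simp only at this ⊢
        omega
      · intro x hx
        rw [Finset.mem_sigma, Finset.mem_Icc, Finset.mem_range] at hx
        obtain ⟨k, i⟩ := x
        simp only at hx
        have hk : i + (k - 1 - i) + 1 = k := by omega
        exact Sigma.ext hk (heq_of_eq rfl)
      · intro p hp
        obtain ⟨a, b⟩ := p
        simp only [Prod.mk.injEq]
        exact ⟨trivial, by omega⟩
      · intro x hx
        rw [Finset.mem_sigma, Finset.mem_Icc, Finset.mem_range] at hx
        obtain ⟨k, i⟩ := x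
        simp only at hx ⊢
        have hij : i + (k - 1 - i) < l.length := by omega
        rw [toV_hins 𝒜 circ one δ m hone hcdeg hδdeg hm1 hmrec hij]
        have e1 : l.length - i - (k - 1 - i) = l.length - k + 1 := by omega
        have e2 : l.length - (k - 1 - i) = i + (l.length - k + 1) := by omega
        rw [e1, e2]
    rw [← hx, hmrec l h2]
    abel
end Star


section ABlemmas

variable (m : List V → V)

lemma Anest {l : List (Σ i : ℤ, 𝒜 i)} {i j p q : ℕ}
    (hij : i + j < l.length) (hp : p ≤ i) (hq : q ≤ j) :
    hins 𝒜 m (hins 𝒜 m l i j) p q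
      = l.take p ++ mp 𝒜 m (hins 𝒜 m ((l.drop p).take (l.length - p - q)) (i - p) (j - q))
          :: l.drop (l.length - q)
    ∧ ((l.drop p).take (l.length - p - q)).length = l.length - p - q
    ∧ ((-1:K) ^ degsum 𝒜 (l.take i)) * ((-1:K) ^ degsum 𝒜 ((hins 𝒜 m l i j).take p))
      = (-1:K) ^ degsum 𝒜 ((((l.drop p).take (l.length - p - q))).take (i - p)) := by
  obtain ⟨hl, ha, hb, hc⟩ := decomp 𝒜 hij
  set a := l.take i with hadef
  set b := (l.drop i).take (l.length - i - j) with hbdef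
  set c := l.drop (l.length - j) with hcdef
  set a₁ := a.take p with ha1def
  set a₂ := a.drop p with ha2def
  set c₁ := c.take (j - q) with hc1def
  set c₂ := c.drop (j - q) with hc2def
  have ha1 : a₁.length = p := by rw [ha1def, List.length_take]; omega
  have ha2 : a₂.length = i - p := by rw [ha2def, List.length_drop]; omega
  have hc1 : c₁.length = j - q := by rw [hc1def, List.length_take]; omega
  have hc2 : c₂.length = q := by rw [hc2def, List.length_drop]; omega
  have haa : a = a₁ ++ a₂ := (List.take_append_drop p a).symm
  have hcc : c = c₁ ++ c₂ := (List.take_append_drop (j - q) c).symm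
  set w := a₂ ++ b ++ c₁ with hwdef
  have hwlen : w.length = l.length - p - q := by
    rw [hwdef]; simp only [List.length_append]; omega
  have hl2 : l = a₁ ++ (w ++ c₂) := by
    rw [hwdef]
    conv_lhs => rw [hl, haa, hcc]
    simp [List.append_assoc]
  have hlp : l.take p = a₁ := by
    conv_lhs => rw [hl2]
    exact List.take_left' ha1
  have hldropp : l.drop p = w ++ c₂ := by
    conv_lhs => rw [hl2]
    exact List.drop_left' ha1
  have hwin : (l.drop p).take (l.length - p - q) = w := by
    rw [hldropp]
    exact List.take_left' hwlen
  have hlq : l.drop (l.length - q) = c₂ := by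
    rw [hc2def, hcdef, List.drop_drop]
    congr 1
    omega
  have EL : hins 𝒜 m l i j = a ++ mp 𝒜 m b :: c := hins_eq_of_decomp 𝒜 m hl ha hc
  have Ew : hins 𝒜 m w (i - p) (j - q) = a₂ ++ mp 𝒜 m b :: c₁ :=
    hins_eq_of_decomp 𝒜 m rfl ha2 hc1
  have hLdecomp : a ++ mp 𝒜 m b :: c = a₁ ++ (a₂ ++ mp 𝒜 m b :: c₁) ++ c₂ := by
    rw [haa, hcc]
    simp [List.append_assoc]
  have E2 : hins 𝒜 m (hins 𝒜 m l i j) p q = a₁ ++ mp 𝒜 m (a₂ ++ mp 𝒜 m b :: c₁) :: c₂ := by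
    rw [EL]
    exact hins_eq_of_decomp 𝒜 m hLdecomp ha1 hc2
  have hLtakep : (hins 𝒜 m l i j).take p = a₁ := by
    rw [EL, hLdecomp, List.append_assoc]
    exact List.take_left' ha1
  have hwtake : w.take (i - p) = a₂ := by
    rw [hwdef, List.append_assoc]
    exact List.take_left' ha2
  refine ⟨?_, by rw [hwin, hwlen], ?_⟩
  · rw [E2, hlp, hwin, Ew, hlq]
  · rw [hLtakep, hwin, hwtake, haa, degsum_append]
    exact sgn_cancel _ _

lemma Bswap {l : List (Σ i : ℤ, 𝒜 i)} {i j p q : ℕ}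
    (hij : i + j < l.length) (hpq : p + q < i + 1 + j) (hp : i < p) :
    hins 𝒜 m (hins 𝒜 m l i j) p q
      = hins 𝒜 m (hins 𝒜 m l (l.length - j + p - i - 1) q) i (p + q - i)
    ∧ ((-1:K) ^ degsum 𝒜 (l.take i)) * ((-1:K) ^ degsum 𝒜 ((hins 𝒜 m l i j).take p))
      = -(((-1:K) ^ degsum 𝒜 (l.take (l.length - j + p - i - 1)))
          * ((-1:K) ^ degsum 𝒜 ((hins 𝒜 m l (l.length - j + p - i - 1) q).take i))) := by
  obtain ⟨hl, ha, hb, hc⟩ := decomp 𝒜 hij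
  set a := l.take i with hadef
  set b := (l.drop i).take (l.length - i - j) with hbdef
  set c := l.drop (l.length - j) with hcdef
  set r := p - i - 1 with hrdef
  set s := i + 1 + j - p - q with hsdef
  set c₁ := c.take r with hc1def
  set c₂ := (c.drop r).take s with hc2def
  set c₃ := c.drop (j - q) with hc3def
  have hc1 : c₁.length = r := by rw [hc1def, List.length_take]; omega
  have hc2 : c₂.length = s := by rw [hc2def, List.length_take, List.length_drop]; omega
  have hc3 : c₃.length = q := by rw [hc3def, List.length_drop]; omega
  have hccc : c = c₁ ++ c₂ ++ c₃ := by
    rw [List.append_assoc, hc1def, hc2def, hc3def]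
    conv_lhs => rw [← List.take_append_drop r c]
    congr 1
    conv_lhs => rw [← List.take_append_drop s (c.drop r)]
    congr 1
    rw [List.drop_drop]
    congr 1
    omega
  set I := l.length - j + p - i - 1 with hIdef
  have hI : I = i + (l.length - i - j) + r := by omega
  have EL : hins 𝒜 m l i j = a ++ mp 𝒜 m b :: c := hins_eq_of_decomp 𝒜 m hl ha hc
  have hLdecomp : a ++ mp 𝒜 m b :: c = (a ++ mp 𝒜 m b :: c₁) ++ c₂ ++ c₃ := by
    rw [hccc]
    simp [List.append_assoc]
  have hlenX : (a ++ mp 𝒜 m b :: c₁).length = p := by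
    simp only [List.length_append, List.length_cons, ha, hc1]
    omega
  have E2 : hins 𝒜 m (hins 𝒜 m l i j) p q
      = (a ++ mp 𝒜 m b :: c₁) ++ mp 𝒜 m c₂ :: c₃ := by
    rw [EL]
    exact hins_eq_of_decomp 𝒜 m hLdecomp hlenX hc3
  have hl3 : l = (a ++ b ++ c₁) ++ c₂ ++ c₃ := by
    rw [hl, hccc]
    simp [List.append_assoc]
  have hlenY : (a ++ b ++ c₁).length = I := by
    simp only [List.length_append, ha, hb, hc1]
    omega
  have E3 : hins 𝒜 m l I q = (a ++ b ++ c₁) ++ mp 𝒜 m c₂ :: c₃ :=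
    hins_eq_of_decomp 𝒜 m hl3 hlenY hc3
  have hL'decomp : (a ++ b ++ c₁) ++ mp 𝒜 m c₂ :: c₃ = a ++ b ++ (c₁ ++ mp 𝒜 m c₂ :: c₃) := by
    simp [List.append_assoc]
  have hlenZ : (c₁ ++ mp 𝒜 m c₂ :: c₃).length = p + q - i := by
    simp only [List.length_append, List.length_cons, hc1, hc3]
    omega
  have E4 : hins 𝒜 m (hins 𝒜 m l I q) i (p + q - i) = a ++ mp 𝒜 m b :: (c₁ ++ mp 𝒜 m c₂ :: c₃) := by
    rw [E3]
    exact hins_eq_of_decomp 𝒜 m hL'decomp ha hlenZ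
  have hLtakep : (hins 𝒜 m l i j).take p = a ++ mp 𝒜 m b :: c₁ := by
    rw [EL, hLdecomp, List.append_assoc]
    exact List.take_left' hlenX
  have hltakeI : l.take I = a ++ b ++ c₁ := by
    conv_lhs => rw [hl3, List.append_assoc]
    exact List.take_left' hlenY
  have hL'takei : (hins 𝒜 m l I q).take i = a := by
    rw [E3, hL'decomp, List.append_assoc]
    exact List.take_left' ha
  constructor
  · rw [E2, E4]
    simp [List.append_assoc]
  · rw [hLtakep, hltakeI, hL'takei]
    rw [degsum_append, degsum_cons, mp_fst, degsum_append, degsum_append, sgn_mul, sgn_mul]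
    have hexp : degsum 𝒜 a + (degsum 𝒜 a + (degsum 𝒜 b - 1 + degsum 𝒜 c₁))
        = (degsum 𝒜 a + degsum 𝒜 b + degsum 𝒜 c₁ + degsum 𝒜 a) - 1 := by ring
    rw [hexp, sgn_sub_one]

end ABlemmas


section Main

variable (circ : V →ₗ[K] V →ₗ[K] V) (one : V) (δ : V →ₗ[K] V) (m : List V → V)

variable (hone : one ∈ 𝒜 0)
  (hcdeg : ∀ (i j : ℤ) (v w : V), v ∈ 𝒜 i → w ∈ 𝒜 j → circ v w ∈ 𝒜 (i + j))
  (hcunit : ∀ v : V, circ one v = v ∧ circ v one = v)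
  (hδdeg : ∀ (i : ℤ), ∀ v ∈ 𝒜 i, δ v ∈ 𝒜 (i - 1))
  (hδ2 : δ ∘ₗ δ = 0)
  (hm1 : ∀ v : V, m [v] = δ v)
  (hmrec : ∀ l : List (Σ i : ℤ, 𝒜 i), 2 ≤ l.length →
      m (toV 𝒜 l)
        = δ (cprod circ one (toV 𝒜 l))
          - ∑ k ∈ Finset.Icc 2 l.length, ∑ i ∈ Finset.range k,
              ((-1 : K) ^ degsum 𝒜 (l.take i)) •
                cprod circ one
                  ((toV 𝒜 l).take i
                    ++ m (((toV 𝒜 l).drop i).take (l.length - k + 1))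
                      :: (toV 𝒜 l).drop (i + (l.length - k + 1))))

include hone hcdeg hcunit hδdeg hδ2 hm1 hmrec

lemma main : ∀ (n : ℕ) (l : List (Σ i : ℤ, 𝒜 i)), l ≠ [] → l.length ≤ n →
    (∑ p ∈ S l.length,
      ((-1:K) ^ degsum 𝒜 (l.take p.1)) • m (toV 𝒜 (hins 𝒜 m l p.1 p.2))) = 0 := by
  intro n
  induction n using Nat.strong_induction_on with
  | _ n ih =>
  intro l hl hln
  classical
  have hN1 : 1 ≤ l.length := List.length_pos_iff.mpr hl
  set F : ((_ : ℕ × ℕ) × ℕ × ℕ) → V := fun x =>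
    (((-1:K) ^ degsum 𝒜 (l.take x.1.1))
        * ((-1:K) ^ degsum 𝒜 ((hins 𝒜 m l x.1.1 x.1.2).take x.2.1))) •
      cprod circ one (toV 𝒜 (hins 𝒜 m (hins 𝒜 m l x.1.1 x.1.2) x.2.1 x.2.2)) with hF
  set T : Finset ((_ : ℕ × ℕ) × ℕ × ℕ) := (S l.length).sigma (fun p => S (p.1 + 1 + p.2)) with hT
  have mem_T : ∀ x : ((_ : ℕ × ℕ) × ℕ × ℕ),
      x ∈ T ↔ x.1.1 + x.1.2 < l.length ∧ x.2.1 + x.2.2 < x.1.1 + 1 + x.1.2 := by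
    intro x; rw [hT, Finset.mem_sigma, mem_S, mem_S]
  -- Step 1: the big vanishing sum
  have big : ∑ x ∈ T, F x = 0 := by
    rw [hT, Finset.sum_sigma]
    have inner : ∀ p ∈ S l.length, (∑ q ∈ S (p.1 + 1 + p.2), F ⟨p, q⟩)
        = ((-1:K) ^ degsum 𝒜 (l.take p.1)) •
            δ (cprod circ one (toV 𝒜 (hins 𝒜 m l p.1 p.2))) := by
      intro p hp
      rw [← star 𝒜 circ one δ m hone hcdeg hcunit hδdeg hm1 hmrec (hins 𝒜 m l p.1 p.2)
          (hins_ne_nil 𝒜 m l p.1 p.2), length_hins 𝒜 m (mem_S.1 hp), Finset.smul_sum]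
      exact Finset.sum_congr rfl fun q hq => by rw [hF, smul_smul]
    rw [Finset.sum_congr rfl inner]
    have hpull : (∑ p ∈ S l.length, ((-1:K) ^ degsum 𝒜 (l.take p.1)) •
          δ (cprod circ one (toV 𝒜 (hins 𝒜 m l p.1 p.2))))
        = δ (∑ p ∈ S l.length, ((-1:K) ^ degsum 𝒜 (l.take p.1)) •
            cprod circ one (toV 𝒜 (hins 𝒜 m l p.1 p.2))) := by
      rw [map_sum]
      exact Finset.sum_congr rfl fun p hp => (map_smul δ _ _).symm
    rw [hpull, star 𝒜 circ one δ m hone hcdeg hcunit hδdeg hm1 hmrec l hl]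
    have := LinearMap.congr_fun hδ2 (cprod circ one (toV 𝒜 l))
    simpa using this
  -- Step 2: split the index set
  have hsplitA := Finset.sum_filter_add_sum_filter_not T
    (fun x => x.2.1 ≤ x.1.1 ∧ x.2.2 ≤ x.1.2) F
  have hsplitB := Finset.sum_filter_add_sum_filter_not
    (T.filter (fun x => ¬(x.2.1 ≤ x.1.1 ∧ x.2.2 ≤ x.1.2))) (fun x => x.1.1 < x.2.1) F
  have hfB1 : (T.filter (fun x => ¬(x.2.1 ≤ x.1.1 ∧ x.2.2 ≤ x.1.2))).filter
        (fun x => x.1.1 < x.2.1) = T.filter (fun x => x.1.1 < x.2.1) := by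
    rw [Finset.filter_filter]
    refine Finset.filter_congr fun x hx => ?_
    rw [mem_T] at hx
    constructor
    · exact fun h => h.2
    · exact fun h => ⟨by omega, h⟩
  have hfB2 : (T.filter (fun x => ¬(x.2.1 ≤ x.1.1 ∧ x.2.2 ≤ x.1.2))).filter
        (fun x => ¬ x.1.1 < x.2.1) = T.filter (fun x => x.1.2 < x.2.2) := by
    rw [Finset.filter_filter]
    refine Finset.filter_congr fun x hx => ?_
    rw [mem_T] at hx
    constructor
    · exact fun h => by omega
    · exact fun h => ⟨by omega, by omega⟩
  -- Step 3: cancellation of the two disjoint parts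
  have hBcancel : ∑ x ∈ T.filter (fun x => x.1.1 < x.2.1), F x
      = ∑ x ∈ T.filter (fun x => x.1.2 < x.2.2), (-(F x)) := by
    refine Finset.sum_nbij'
      (i := fun x => ⟨(l.length - x.1.2 + x.2.1 - x.1.1 - 1, x.2.2),
                      (x.1.1, x.2.1 + x.2.2 - x.1.1)⟩)
      (j := fun y => ⟨(y.2.1, l.length - y.1.1 - y.1.2 + y.2.2 - 1),
                      (y.2.1 + y.2.2 - y.1.2, y.1.2)⟩) ?_ ?_ ?_ ?_ ?_
    · intro x hx
      rw [Finset.mem_filter, mem_T] at hx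
      rw [Finset.mem_filter, mem_T]
      simp only
      omega
    · intro y hy
      rw [Finset.mem_filter, mem_T] at hy
      rw [Finset.mem_filter, mem_T]
      simp only
      omega
    · intro x hx
      rw [Finset.mem_filter, mem_T] at hx
      obtain ⟨⟨i, j⟩, p, q⟩ := x
      simp only at hx ⊢
      refine Sigma.ext ?_ (heq_of_eq ?_) <;> simp only [Prod.mk.injEq] <;>
        refine ⟨?_, ?_⟩ <;> first | trivial | omega
    · intro y hy
      rw [Finset.mem_filter, mem_T] at hy
      obtain ⟨⟨I, J⟩, P, Q⟩ := y
      simp only at hy ⊢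
      refine Sigma.ext ?_ (heq_of_eq ?_) <;> simp only [Prod.mk.injEq] <;>
        refine ⟨?_, ?_⟩ <;> first | trivial | omega
    · intro x hx
      rw [Finset.mem_filter, mem_T] at hx
      obtain ⟨⟨i, j⟩, p, q⟩ := x
      simp only at hx ⊢
      obtain ⟨hlist, hsign⟩ := Bswap 𝒜 m (l := l) (i := i) (j := j) (p := p) (q := q)
        (by omega) (by omega) (by omega)
      rw [hF]
      simp only
      rw [hlist, hsign, neg_smul]
  -- Step 4: the nested part
  have hA : ∑ x ∈ T.filter (fun x => x.2.1 ≤ x.1.1 ∧ x.2.2 ≤ x.1.2), F x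
      = ∑ y ∈ (S l.length).sigma (fun p => S (l.length - p.1 - p.2)),
          ((-1:K) ^ degsum 𝒜 (((l.drop y.1.1).take (l.length - y.1.1 - y.1.2)).take y.2.1)) •
            cprod circ one (toV 𝒜 (l.take y.1.1
              ++ mp 𝒜 m (hins 𝒜 m ((l.drop y.1.1).take (l.length - y.1.1 - y.1.2)) y.2.1 y.2.2)
                :: l.drop (l.length - y.1.2))) := by
    refine Finset.sum_nbij'
      (i := fun x => ⟨x.2, (x.1.1 - x.2.1, x.1.2 - x.2.2)⟩)
      (j := fun y => ⟨(y.1.1 + y.2.1, y.1.2 + y.2.2), y.1⟩) ?_ ?_ ?_ ?_ ?_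
    · intro x hx
      rw [Finset.mem_filter, mem_T] at hx
      rw [Finset.mem_sigma, mem_S, mem_S]
      simp only
      omega
    · intro y hy
      rw [Finset.mem_sigma, mem_S, mem_S] at hy
      rw [Finset.mem_filter, mem_T]
      simp only
      omega
    · intro x hx
      rw [Finset.mem_filter, mem_T] at hx
      obtain ⟨⟨i, j⟩, p, q⟩ := x
      simp only at hx ⊢
      refine Sigma.ext ?_ (heq_of_eq ?_) <;> simp only [Prod.mk.injEq] <;>
        refine ⟨?_, ?_⟩ <;> first | trivial | omega
    · intro y hy
      rw [Finset.mem_sigma, mem_S, mem_S] at hy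
      obtain ⟨⟨p, q⟩, i', j'⟩ := y
      simp only at hy ⊢
      refine Sigma.ext ?_ (heq_of_eq ?_) <;> simp only [Prod.mk.injEq] <;>
        refine ⟨?_, ?_⟩ <;> first | trivial | omega
    · intro x hx
      rw [Finset.mem_filter, mem_T] at hx
      obtain ⟨⟨i, j⟩, p, q⟩ := x
      simp only at hx ⊢
      obtain ⟨hlist, hwl, hsign⟩ := Anest 𝒜 m (l := l) (i := i) (j := j) (p := p) (q := q)
        (by omega) (by omega) (by omega)
      rw [hF]
      simp only
      rw [hlist, hsign]
  -- Step 5: evaluate the nested part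
  have hA2 : (∑ y ∈ (S l.length).sigma (fun p => S (l.length - p.1 - p.2)),
          ((-1:K) ^ degsum 𝒜 (((l.drop y.1.1).take (l.length - y.1.1 - y.1.2)).take y.2.1)) •
            cprod circ one (toV 𝒜 (l.take y.1.1
              ++ mp 𝒜 m (hins 𝒜 m ((l.drop y.1.1).take (l.length - y.1.1 - y.1.2)) y.2.1 y.2.2)
                :: l.drop (l.length - y.1.2))))
      = ∑ p ∈ S l.length,
          ((-1:K) ^ degsum 𝒜 (l.take p.1)) • m (toV 𝒜 (hins 𝒜 m l p.1 p.2)) := by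
    rw [Finset.sum_sigma]
    have h00 : ((0:ℕ), (0:ℕ)) ∈ S l.length := mem_S.2 (by omega)
    rw [← Finset.add_sum_erase _ _ h00]
    have hzero : ∀ p ∈ (S l.length).erase ((0:ℕ), (0:ℕ)),
        (∑ q ∈ S (l.length - p.1 - p.2),
          ((-1:K) ^ degsum 𝒜 (((l.drop p.1).take (l.length - p.1 - p.2)).take q.1)) •
            cprod circ one (toV 𝒜 (l.take p.1
              ++ mp 𝒜 m (hins 𝒜 m ((l.drop p.1).take (l.length - p.1 - p.2)) q.1 q.2)
                :: l.drop (l.length - p.2)))) = 0 := by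
      intro p hp
      rw [Finset.mem_erase, mem_S] at hp
      set w := (l.drop p.1).take (l.length - p.1 - p.2) with hwdef
      have hpq1 : 1 ≤ p.1 + p.2 := by
        rcases Nat.eq_zero_or_pos (p.1 + p.2) with h | h
        · exfalso
          exact hp.1 (by
            have h1 : p.1 = 0 := by omega
            have h2 : p.2 = 0 := by omega
            exact Prod.ext h1 h2)
        · exact h
      have hwlen : w.length = l.length - p.1 - p.2 := by
        rw [hwdef, List.length_take, List.length_drop]; omega
      have hwne : w ≠ [] := by
        intro h0
        rw [h0] at hwlen
        simp at hwlen
        omega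
      have step : ∀ q ∈ S (l.length - p.1 - p.2),
          ((-1:K) ^ degsum 𝒜 (w.take q.1)) •
            cprod circ one (toV 𝒜 (l.take p.1
              ++ mp 𝒜 m (hins 𝒜 m w q.1 q.2) :: l.drop (l.length - p.2)))
          = slot circ one (toV 𝒜 (l.take p.1)) (toV 𝒜 (l.drop (l.length - p.2)))
              (((-1:K) ^ degsum 𝒜 (w.take q.1)) • m (toV 𝒜 (hins 𝒜 m w q.1 q.2))) := by
        intro q hq
        rw [map_smul, slot_apply]
        congr 2
        rw [toV_append, toV_cons,
          mp_val 𝒜 circ one δ m hone hcdeg hδdeg hm1 hmrec (hins_ne_nil 𝒜 m w q.1 q.2)]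
      rw [Finset.sum_congr rfl step, ← map_sum]
      have hSw : S (l.length - p.1 - p.2) = S w.length := by rw [hwlen]
      rw [hSw]
      rw [ih w.length (by omega) w hwne le_rfl, map_zero]
    rw [Finset.sum_eq_zero hzero, add_zero]
    have hw00 : (l.drop (0:ℕ)).take (l.length - 0 - 0) = l := by
      simp [List.drop_zero, List.take_length]
    refine Finset.sum_congr (by rw [Nat.sub_zero, Nat.sub_zero]) fun q hq => ?_
    rw [hw00]
    congr 1
    have : toV 𝒜 (l.take (0:ℕ) ++ mp 𝒜 m (hins 𝒜 m l q.1 q.2) :: l.drop (l.length - 0))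
        = [m (toV 𝒜 (hins 𝒜 m l q.1 q.2))] := by
      rw [List.take_zero, Nat.sub_zero, List.drop_length, List.nil_append, toV_cons, toV_nil,
        mp_val 𝒜 circ one δ m hone hcdeg hδdeg hm1 hmrec (hins_ne_nil 𝒜 m l q.1 q.2)]
    rw [this, cprod_cons]
    exact (hcunit _).2
  -- Step 6: assemble
  have hBzero : ∑ x ∈ T.filter (fun x => ¬(x.2.1 ≤ x.1.1 ∧ x.2.2 ≤ x.1.2)), F x = 0 := by
    rw [← hsplitB, hfB1, hfB2, hBcancel, Finset.sum_neg_distrib]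
    abel
  have : ∑ x ∈ T.filter (fun x => x.2.1 ≤ x.1.1 ∧ x.2.2 ≤ x.1.2), F x = 0 := by
    have := hsplitA
    rw [hBzero, add_zero, big] at this
    exact this
  rw [← hA2, ← hA, this]

end Main

end Stmt19

/-- In a 2-associative differential algebra `(V, •, ∘, 1, ∂)`, Börjeson's
higher products `m_n` (defined by `m₁ = ∂` and the recursion
`m_n = ∂∘^{(n−1)} − Σ_{k=2}^n ∘^{(k−1)} Σ_{i+1+j=k} id^{⊗i} ⊗ m_{n−i−j} ⊗ id^{⊗j}`)
satisfy the shifted A∞ relations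
`Σ_{i+j<n} m_{i+1+j}(id^{⊗i} ⊗ m_{n−i−j} ⊗ id^{⊗j}) = 0`, with Koszul signs on
homogeneous elements. -/
theorem stmt19 (K V : Type*) [Field K] [AddCommGroup V] [Module K V]
    (𝒜 : ℤ → Submodule K V) [DirectSum.Decomposition 𝒜]
    (bullet circ : V →ₗ[K] V →ₗ[K] V) (one : V) (δ : V →ₗ[K] V)
    -- a 2-associative differential algebra structure
    (hbassoc : ∀ u v w : V, bullet (bullet u v) w = bullet u (bullet v w))
    (hcassoc : ∀ u v w : V, circ (circ u v) w = circ u (circ v w))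
    (hbunit : ∀ v : V, bullet one v = v ∧ bullet v one = v)
    (hcunit : ∀ v : V, circ one v = v ∧ circ v one = v)
    (hone : one ∈ 𝒜 0)
    (hbdeg : ∀ (i j : ℤ) (v w : V), v ∈ 𝒜 i → w ∈ 𝒜 j → bullet v w ∈ 𝒜 (i + j))
    (hcdeg : ∀ (i j : ℤ) (v w : V), v ∈ 𝒜 i → w ∈ 𝒜 j → circ v w ∈ 𝒜 (i + j))
    (hδdeg : ∀ (i : ℤ), ∀ v ∈ 𝒜 i, δ v ∈ 𝒜 (i - 1))
    (hδ2 : δ ∘ₗ δ = 0)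
    (hderiv : ∀ (i : ℤ), ∀ x ∈ 𝒜 i, ∀ y : V,
      δ (bullet x y) = bullet (δ x) y + ((-1 : K) ^ i) • bullet x (δ y))
    -- the family (m_n) and its recursive definition on homogeneous elements
    (m : List V → V)
    (hm1 : ∀ v : V, m [v] = δ v)
    (hmrec : ∀ l : List (Σ i : ℤ, 𝒜 i), 2 ≤ l.length →
      m (toV 𝒜 l)
        = δ (cprod circ one (toV 𝒜 l))
          - ∑ k ∈ Finset.Icc 2 l.length, ∑ i ∈ Finset.range k,
              ((-1 : K) ^ degsum 𝒜 (l.take i)) •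
                cprod circ one
                  ((toV 𝒜 l).take i
                    ++ m (((toV 𝒜 l).drop i).take (l.length - k + 1))
                      :: (toV 𝒜 l).drop (i + (l.length - k + 1)))) :
    -- the (shifted) A∞ relations, on homogeneous elements with Koszul signs
    ∀ l : List (Σ i : ℤ, 𝒜 i), 1 ≤ l.length →
      ∑ i ∈ Finset.range l.length, ∑ j ∈ Finset.range (l.length - i),
        ((-1 : K) ^ degsum 𝒜 (l.take i)) •
          m ((toV 𝒜 l).take i
              ++ m (((toV 𝒜 l).drop i).take (l.length - i - j))
                :: (toV 𝒜 l).drop (l.length - j))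
        = 0 := by
  intro l hl
  have hlne : l ≠ [] := List.length_pos_iff.mp hl
  have key := Stmt19.main 𝒜 circ one δ m hone hcdeg hcunit hδdeg hδ2 hm1 hmrec
    l.length l hlne le_rfl
  rw [Stmt19.sum_S l.length (fun i j =>
    ((-1 : K) ^ degsum 𝒜 (l.take i)) •
      m ((toV 𝒜 l).take i
          ++ m (((toV 𝒜 l).drop i).take (l.length - i - j))
            :: (toV 𝒜 l).drop (l.length - j)))]
  rw [← key]
  refine Finset.sum_congr rfl fun p hp => ?_
  rw [Stmt19.toV_hins 𝒜 circ one δ m hone hcdeg hδdeg hm1 hmrec (Stmt19.mem_S.1 hp)]
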